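/- Let S be a finite singleton-rich semigroup. There do not exist pairwise distinct elements s₁, …, sₙ of S with n > 1 such that s₁ ≪ s₂ ≪ ⋯ ≪ sₙ ≪ s₁. Consequently, the relation ≪ is reflexive and antisymmetric. -/
import Mathlib


open scoped Classical

/-- φ*(s): the idempotent right identities of `s`. -/
def rIds {S : Type*} [Mul S] (s : S) : Set S := {e | e * e = e ∧ s * e = s}

/-- φ⁺(s): the idempotent left identities of `s`. -/
def lIds {S : Type*} [Mul S] (s : S) : Set S := {e | e * e = e ∧ e * s = s}

/-- `x` is the (necessarily unique) element of a singleton kernel (minimal ideal) of the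
subsemigroup `T`: `{x}` is an ideal of `T`, hence the minimal ideal of `T`. -/
def IsKer {S : Type*} [Semigroup S] (T : Subsemigroup S) (x : S) : Prop :=
  x ∈ T ∧ ∀ a ∈ T, a * x = x ∧ x * a = x

/-- The natural partial order on idempotents: `e ≤ f` iff `ef = fe = e`. -/
def nle {S : Type*} [Mul S] (e f : S) : Prop := e * f = e ∧ f * e = e

/-- The relation `≪`: `s ≪ t` iff `s = s⁺ t s*`, where `sa s = s*` and `pl s = s⁺`. -/
def ll {S : Type*} [Mul S] (sa pl : S → S) (s t : S) : Prop := s = pl s * t * sa s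

namespace Stmt6Aux

variable {S : Type*} [Semigroup S]

/-- `pw z n = z^(n+1)`. -/
def pw (z : S) : ℕ → S
  | 0 => z
  | n + 1 => pw z n * z

lemma pw_succ (z : S) (n : ℕ) : pw z (n + 1) = pw z n * z := rfl

lemma pw_comm (z : S) (n : ℕ) : z * pw z n = pw z n * z := by
  induction n with
  | zero => rfl
  | succ n ih => rw [pw_succ, ← mul_assoc, ih]

lemma pw_add (z : S) (m n : ℕ) : pw z (m + n + 1) = pw z m * pw z n := by
  induction n with
  | zero => rfl
  | succ n ih =>
    have h : m + (n + 1) + 1 = (m + n + 1) + 1 := by omega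
    rw [h, pw_succ, ih, pw_succ, mul_assoc]

lemma pw_conj (a b : S) (k : ℕ) : pw (a * b) k * a = a * pw (b * a) k := by
  induction k with
  | zero => exact mul_assoc a b a
  | succ k ih =>
    rw [pw_succ, pw_succ]
    calc pw (a * b) k * (a * b) * a
        = pw (a * b) k * (a * (b * a)) := by simp only [mul_assoc]
      _ = (pw (a * b) k * a) * (b * a) := by simp only [mul_assoc]
      _ = a * pw (b * a) k * (b * a) := by rw [ih]
      _ = a * (pw (b * a) k * (b * a)) := by simp only [mul_assoc]

lemma pw_absorb_right {z q : S} (h : z * q = z) (k : ℕ) : pw z k * q = pw z k := by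
  induction k with
  | zero => exact h
  | succ k _ => rw [pw_succ, mul_assoc, h]

lemma pw_absorb_left {z q : S} (h : q * z = z) (k : ℕ) : q * pw z k = pw z k := by
  induction k with
  | zero => exact h
  | succ k ih => rw [pw_succ, ← mul_assoc, ih]

lemma sandwich {a b x : S} (h : x = a * x * b) (k : ℕ) : x = pw a k * x * pw b k := by
  induction k with
  | zero => exact h
  | succ k ih =>
    calc x = a * x * b := h
      _ = a * (pw a k * x * pw b k) * b := by rw [← ih]
      _ = (a * pw a k) * x * (pw b k * b) := by simp only [mul_assoc]
      _ = pw a (k + 1) * x * pw b (k + 1) := by rw [pw_succ a k, pw_succ b k, pw_comm]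

lemma pw_period {z : S} {i d : ℕ} (h : pw z (i + d) = pw z i) :
    ∀ t k, pw z (i + k + t * d) = pw z (i + k) := by
  have step1 : ∀ k, pw z (i + k + d) = pw z (i + k) := by
    intro k
    induction k with
    | zero => simpa using h
    | succ k ih =>
      have h2 : i + (k + 1) + d = (i + k + d) + 1 := by omega
      have h3 : i + (k + 1) = (i + k) + 1 := by omega
      rw [h2, pw_succ, ih, h3, pw_succ]
  intro t
  induction t with
  | zero => simp
  | succ t ih =>
    intro k
    have h4 : i + k + (t + 1) * d = (i + (k + t * d)) + d := by
      rw [Nat.succ_mul]; omega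
    have h5 : i + (k + t * d) = i + k + t * d := by omega
    rw [h4, step1 (k + t * d), h5, ih k]

lemma exists_idem_pw [Fintype S] (z : S) : ∃ N, pw z N * pw z N = pw z N := by
  obtain ⟨i0, j0, hne, heq⟩ := Finite.exists_ne_map_eq_of_infinite (pw z)
  -- wlog i < j
  obtain ⟨i, j, hij, he⟩ : ∃ i j, i < j ∧ pw z i = pw z j := by
    rcases lt_or_gt_of_ne hne with h | h
    · exact ⟨i0, j0, h, heq⟩
    · exact ⟨j0, i0, h, heq.symm⟩
  obtain ⟨d', hd⟩ : ∃ d', j = i + (d' + 1) := ⟨j - i - 1, by omega⟩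
  have hper : pw z (i + (d' + 1)) = pw z i := by rw [← hd]; exact he.symm
  set d : ℕ := d' + 1 with hdd
  refine ⟨i + (d' + i * d'), ?_⟩
  rw [← pw_add]
  have h1 : i + (d' + i * d') + (i + (d' + i * d')) + 1
      = i + (d' + i * d') + (i + 1) * d := by
    rw [hdd]; ring
  rw [h1, pw_period hper (i + 1) (d' + i * d')]

lemma pw_idem_mul {z : S} {N : ℕ} (h : pw z N * pw z N = pw z N) (c : ℕ) :
    pw z (N + c * (N + 1)) * pw z (N + c * (N + 1)) = pw z (N + c * (N + 1)) := by
  have aux : ∀ m, pw z (N + m * (N + 1)) = pw z N := by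
    intro m
    induction m with
    | zero => simp
    | succ m ih =>
      have h2 : N + (m + 1) * (N + 1) = (N + m * (N + 1)) + N + 1 := by
        rw [Nat.succ_mul]; omega
      rw [h2, pw_add, ih, h]
  rw [← pw_add]
  have h3 : N + c * (N + 1) + (N + c * (N + 1)) + 1 = N + (2 * c + 1) * (N + 1) := by ring
  rw [h3, aux (2 * c + 1), ← aux c]

lemma exists_idem_pw_pair [Fintype S] (a b : S) :
    ∃ N, (pw a N * pw a N = pw a N) ∧ (pw b N * pw b N = pw b N) := by
  obtain ⟨Na, ha⟩ := exists_idem_pw a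
  obtain ⟨Nb, hb⟩ := exists_idem_pw b
  refine ⟨Na + Nb + Na * Nb, ?_, ?_⟩
  · have h := pw_idem_mul ha Nb
    rwa [show Na + Nb * (Na + 1) = Na + Nb + Na * Nb from by ring] at h
  · have h := pw_idem_mul hb Na
    rwa [show Nb + Na * (Nb + 1) = Na + Nb + Na * Nb from by ring] at h

lemma exists_idem_pw_four [Fintype S] (a b c d : S) :
    ∃ N, (pw a N * pw a N = pw a N) ∧ (pw b N * pw b N = pw b N) ∧
      (pw c N * pw c N = pw c N) ∧ (pw d N * pw d N = pw d N) := by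
  obtain ⟨N1, ha, hb⟩ := exists_idem_pw_pair a b
  obtain ⟨N2, hc, hd⟩ := exists_idem_pw_pair c d
  refine ⟨N1 + N2 + N1 * N2, ?_, ?_, ?_, ?_⟩
  · have h := pw_idem_mul ha N2
    rwa [show N1 + N2 * (N1 + 1) = N1 + N2 + N1 * N2 from by ring] at h
  · have h := pw_idem_mul hb N2
    rwa [show N1 + N2 * (N1 + 1) = N1 + N2 + N1 * N2 from by ring] at h
  · have h := pw_idem_mul hc N1
    rwa [show N2 + N1 * (N2 + 1) = N1 + N2 + N1 * N2 from by ring] at h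
  · have h := pw_idem_mul hd N1
    rwa [show N2 + N1 * (N2 + 1) = N1 + N2 + N1 * N2 from by ring] at h

section SR

variable (sa pl : S → S)
variable (hsa : ∀ s : S, IsKer (Subsemigroup.closure (rIds s)) (sa s))
variable (hpl : ∀ s : S, IsKer (Subsemigroup.closure (lIds s)) (pl s))

lemma mul_closure_rIds (s : S) {a : S} (ha : a ∈ Subsemigroup.closure (rIds s)) :
    s * a = s := by
  induction ha using Subsemigroup.closure_induction with
  | mem x hx => exact hx.2
  | mul x y hx hy ihx ihy => rw [← mul_assoc, ihx, ihy]

lemma closure_lIds_mul (s : S) {a : S} (ha : a ∈ Subsemigroup.closure (lIds s)) :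
    a * s = s := by
  induction ha using Subsemigroup.closure_induction with
  | mem x hx => exact hx.2
  | mul x y hx hy ihx ihy => rw [mul_assoc, ihy, ihx]

include hsa in
lemma mul_sa (s : S) : s * sa s = s := mul_closure_rIds s (hsa s).1

include hpl in
lemma pl_mul (s : S) : pl s * s = s := closure_lIds_mul s (hpl s).1

include hsa in
lemma sa_idem (s : S) : sa s * sa s = sa s := ((hsa s).2 (sa s) (hsa s).1).1

include hpl in
lemma pl_idem (s : S) : pl s * pl s = pl s := ((hpl s).2 (pl s) (hpl s).1).1

include hsa in
lemma sa_absorb {s f : S} (hf : f ∈ rIds s) : f * sa s = sa s ∧ sa s * f = sa s :=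
  (hsa s).2 f (Subsemigroup.subset_closure hf)

include hpl in
lemma pl_absorb {s f : S} (hf : f ∈ lIds s) : f * pl s = pl s ∧ pl s * f = pl s :=
  (hpl s).2 f (Subsemigroup.subset_closure hf)

include hsa in
lemma sa_of_idem {e : S} (he : e * e = e) : sa e = e := by
  have h1 : e * sa e = e := mul_sa sa hsa e
  have h2 : e * sa e = sa e := (sa_absorb sa hsa (s := e) ⟨he, he⟩).1
  rw [← h2]; exact h1

include hpl in
lemma pl_of_idem {e : S} (he : e * e = e) : pl e = e := by
  have h1 : pl e * e = e := pl_mul pl hpl e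
  have h2 : pl e * e = pl e := (pl_absorb pl hpl (s := e) ⟨he, he⟩).2
  rw [← h2]; exact h1

include hpl in
/-- For idempotents, `f * e = e` implies `e * f = e`. -/
lemma idem_left_to_right {e f : S} (he : e * e = e) (hf : f * f = f) (hfe : f * e = e) :
    e * f = e := by
  have h := (pl_absorb pl hpl (s := e) (f := f) ⟨hf, hfe⟩).2
  rwa [pl_of_idem pl hpl he] at h

include hsa in
/-- For idempotents, `e * f = e` implies `f * e = e`. -/
lemma idem_right_to_left {e f : S} (he : e * e = e) (hf : f * f = f) (hef : e * f = e) :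
    f * e = e := by
  have h := (sa_absorb sa hsa (s := e) (f := f) ⟨hf, hef⟩).1
  rwa [sa_of_idem sa hsa he] at h

include hsa hpl in
/-- Key lemma: if `x ≪ y` and `y` is a two-sided factor multiple of `x`, then `x = y`. -/
lemma key [Fintype S] (x y u v : S) (hx : x = pl x * y * sa x) (hy : y = u * x * v) :
    x = y := by
  set p := pl x with hpdef
  set q := sa x with hqdef
  have hq : q * q = q := sa_idem sa hsa x
  have hp : p * p = p := pl_idem pl hpl x
  have h1 : x = (p * u) * x * (v * q) := by
    calc x = p * y * q := hx
      _ = p * (u * x * v) * q := by rw [← hy]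
      _ = (p * u) * x * (v * q) := by simp only [mul_assoc]
  have h2 : y = (u * p) * y * (q * v) := by
    calc y = u * x * v := hy
      _ = u * (p * y * q) * v := by rw [← hx]
      _ = (u * p) * y * (q * v) := by simp only [mul_assoc]
  obtain ⟨N, Wpu, Wvq, Wup, Wqv⟩ := exists_idem_pw_four (p * u) (v * q) (u * p) (q * v)
  have hxs : x = pw (p * u) N * x * pw (v * q) N := sandwich h1 N
  have hys : y = pw (u * p) N * y * pw (q * v) N := sandwich h2 N
  have hxr : x * pw (v * q) N = x := by
    conv_lhs => rw [hxs]
    rw [mul_assoc (pw (p * u) N * x) (pw (v * q) N) (pw (v * q) N), Wvq, ← hxs]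
  have hxl : pw (p * u) N * x = x := by
    conv_lhs => rw [hxs]
    rw [← mul_assoc (pw (p * u) N) (pw (p * u) N * x) (pw (v * q) N),
      ← mul_assoc (pw (p * u) N) (pw (p * u) N) x, Wpu, ← hxs]
  have hyr : y * pw (q * v) N = y := by
    conv_lhs => rw [hys]
    rw [mul_assoc (pw (u * p) N * y) (pw (q * v) N) (pw (q * v) N), Wqv, ← hys]
  have hyl : pw (u * p) N * y = y := by
    conv_lhs => rw [hys]
    rw [← mul_assoc (pw (u * p) N) (pw (u * p) N * y) (pw (q * v) N),
      ← mul_assoc (pw (u * p) N) (pw (u * p) N) y, Wup, ← hys]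
  -- right side: (v*q)^N = q
  have habs := sa_absorb sa hsa (s := x) (f := pw (v * q) N) ⟨Wvq, hxr⟩
  have hBq : pw (v * q) N * q = pw (v * q) N :=
    pw_absorb_right (by rw [mul_assoc, hq]) N
  have hBeq : pw (v * q) N = q := by rw [← hBq]; exact habs.1
  -- (q*v)^N = q
  have hqC : q * pw (q * v) N = pw (q * v) N :=
    pw_absorb_left (by rw [← mul_assoc, hq]) N
  have hCq : pw (q * v) N * q = q := by
    rw [pw_conj q v N, hBeq, hq]
  have hqf : q * pw (q * v) N = q :=
    idem_left_to_right pl hpl hq Wqv hCq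
  have hCeq : pw (q * v) N = q := by rw [← hqC]; exact hqf
  have hyq : y * q = y := by rw [← hCeq]; exact hyr
  -- left side: (p*u)^N = p
  have habsl := pl_absorb pl hpl (s := x) (f := pw (p * u) N) ⟨Wpu, hxl⟩
  have hpA : p * pw (p * u) N = pw (p * u) N :=
    pw_absorb_left (by rw [← mul_assoc, hp]) N
  have hAeq : pw (p * u) N = p := by rw [← hpA]; exact habsl.2
  -- (u*p)^N = p
  have hDp : pw (u * p) N * p = pw (u * p) N :=
    pw_absorb_right (by rw [mul_assoc, hp]) N
  have hpD : p * pw (u * p) N = p := by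
    have h := pw_conj p u N
    rw [hAeq, hp] at h
    exact h.symm
  have hfp : pw (u * p) N * p = p :=
    idem_right_to_left sa hsa hp Wup hpD
  have hDeq : pw (u * p) N = p := by rw [← hDp]; exact hfp
  have hpy : p * y = y := by rw [← hDeq]; exact hyl
  calc x = p * y * q := hx
    _ = y * q := by rw [hpy]
    _ = y := hyq

end SR

end Stmt6Aux

open Stmt6Aux in
/-- In a finite singleton-rich semigroup there is no cycle `s₁ ≪ s₂ ≪ ⋯ ≪ sₙ ≪ s₁` of
pairwise distinct elements with `n > 1`; consequently `≪` is reflexive and antisymmetric. -/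
theorem stmt6 {S : Type*} [Semigroup S] [Fintype S] (sa pl : S → S)
    (hsa : ∀ s : S, IsKer (Subsemigroup.closure (rIds s)) (sa s))
    (hpl : ∀ s : S, IsKer (Subsemigroup.closure (lIds s)) (pl s)) :
    (∀ n : ℕ, ∀ hn : 1 < n, ∀ f : Fin n → S, Function.Injective f →
        ¬ (∀ i : Fin n, ll sa pl (f i) (f ⟨(i.val + 1) % n, Nat.mod_lt _ (by omega)⟩))) ∧
      (∀ s : S, ll sa pl s s) ∧
      (∀ s t : S, ll sa pl s t → ll sa pl t s → s = t) := by
  refine ⟨?_, ?_, ?_⟩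
  · intro n hn f hinj hll
    have hnpos : 0 < n := by omega
    set g : ℕ → S := fun m => f ⟨m % n, Nat.mod_lt _ hnpos⟩ with hg
    have hstep : ∀ m, g m = pl (g m) * g (m + 1) * sa (g m) := by
      intro m
      have h := hll ⟨m % n, Nat.mod_lt _ hnpos⟩
      unfold ll at h
      have hval : (m + 1) % n = (m % n + 1) % n := by
        conv_lhs => rw [Nat.add_mod]
        rw [Nat.mod_eq_of_lt hn]
      have hfg : g (m + 1) = f ⟨(m % n + 1) % n, Nat.mod_lt _ hnpos⟩ := by
        show f _ = f _
        exact congrArg f (Fin.ext hval)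
      rw [hg]
      show f _ = pl (f _) * g (m + 1) * sa (f _)
      rw [hfg]
      exact h
    have chain : ∀ k m, ∃ u v : S, g m = u * g (m + k + 1) * v := by
      intro k
      induction k with
      | zero =>
        intro m
        exact ⟨pl (g m), sa (g m), by simpa using hstep m⟩
      | succ k ih =>
        intro m
        obtain ⟨u, v, huv⟩ := ih (m + 1)
        refine ⟨pl (g m) * u, v * sa (g m), ?_⟩
        calc g m = pl (g m) * g (m + 1) * sa (g m) := hstep m
          _ = pl (g m) * (u * g (m + 1 + k + 1) * v) * sa (g m) := by rw [← huv]
          _ = (pl (g m) * u) * g (m + (k + 1) + 1) * (v * sa (g m)) := by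
              have h : m + 1 + k + 1 = m + (k + 1) + 1 := by omega
              rw [h]; simp only [mul_assoc]
    obtain ⟨u, v, huv⟩ := chain (n - 2) 1
    have hgn : g (1 + (n - 2) + 1) = g 0 := by
      have h1 : 1 + (n - 2) + 1 = n := by omega
      rw [h1, hg]
      exact congrArg f (Fin.ext (by simp))
    rw [hgn] at huv
    have h01 : g 0 = g 1 := key sa pl hsa hpl (g 0) (g 1) u v (hstep 0) huv
    have heq := hinj h01
    have hv := congrArg Fin.val heq
    simp only [Nat.zero_mod, Nat.mod_eq_of_lt hn] at hv
    omega
  · intro s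
    show s = pl s * s * sa s
    rw [pl_mul pl hpl s, mul_sa sa hsa s]
  · intro s t hst hts
    exact key sa pl hsa hpl s t (pl t) (sa t) hst hts
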